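/- Let q be an odd prime power and F = GF(q). Let W be the 4-dimensional subspace of quadratic forms over F spanned by X0^2, X0X2, X1^2 and X2^2 (the web of conics associated with the line-orbit o_{12,1}). Then among the conics of W there are exactly q+2 double lines, exactly q^2+(q−1)/2 pairs of real lines, exactly q^2−(q+1)/2 pairs of imaginary lines, and exactly q^3−q^2 nonsingular conics. -/

import Mathlib

open Matrix

namespace Conics

/-- Coefficient vector (a0,...,a5) of the product of two linear forms
`(b0*X0+b1*X1+b2*X2)*(c0*X0+c1*X1+c2*X2)`, where the quadratic form with
coefficient vector `a` is `a0*X0^2 + a1*X0*X1 + a2*X0*X2 + a3*X1^2 + a4*X1*X2 + a5*X2^2`. -/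
def mulLin {F : Type} [Field F] (b c : Fin 3 → F) : Fin 6 → F :=
  ![b 0 * c 0, b 0 * c 1 + b 1 * c 0, b 0 * c 2 + b 2 * c 0,
    b 1 * c 1, b 1 * c 2 + b 2 * c 1, b 2 * c 2]

/-- The discriminant of the quadratic form with coefficient vector `a`. -/
def disc {F : Type} [Field F] (a : Fin 6 → F) : F :=
  4 * a 0 * a 3 * a 5 + a 1 * a 2 * a 4 - a 0 * a 4 ^ 2 - a 3 * a 2 ^ 2 - a 5 * a 1 ^ 2

/-- `f_a` is a double line: `f_a = c * l^2` for a nonzero scalar `c` and nonzero linear form `l`. -/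
def IsDoubleLine {F : Type} [Field F] (a : Fin 6 → F) : Prop :=
  ∃ (c : F) (l : Fin 3 → F), c ≠ 0 ∧ l ≠ 0 ∧ a = c • mulLin l l

/-- `f_a` is a pair of (distinct) real lines: `f_a = l1 * l2` with neither linear form a scalar
multiple of the other. -/
def IsRealPair {F : Type} [Field F] (a : Fin 6 → F) : Prop :=
  ∃ l1 l2 : Fin 3 → F, (¬ ∃ t : F, l2 = t • l1) ∧ (¬ ∃ t : F, l1 = t • l2) ∧ a = mulLin l1 l2

/-- `f_a` is a pair of conjugate imaginary lines: singular, but not a product of two linear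
forms over `F`. -/
def IsImagPair {F : Type} [Field F] (a : Fin 6 → F) : Prop :=
  disc a = 0 ∧ ¬ ∃ l1 l2 : Fin 3 → F, a = mulLin l1 l2

/-- `f_a` is a nonsingular conic. -/
def IsNonsingular {F : Type} [Field F] (a : Fin 6 → F) : Prop :=
  disc a ≠ 0

/-- The number of conics of a given type `T` in a linear system `W` (a subspace of the space of
quadratic forms, identified with `F^6`): the number of 1-dimensional subspaces `⟨a⟩` of `W`,
`a ≠ 0`, such that `f_a` has type `T`. -/
noncomputable def numConics {F : Type} [Field F] (W : Submodule F (Fin 6 → F))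
    (T : (Fin 6 → F) → Prop) : ℕ :=
  Set.ncard {P : Submodule F (Fin 6 → F) |
    ∃ a : Fin 6 → F, a ≠ 0 ∧ a ∈ W ∧ T a ∧ P = Submodule.span F {a}}

/-- The symmetric 3×3 matrix associated with a point `y` of `PG(5,q)`. -/
def M {F : Type} [Field F] (y : Fin 6 → F) : Matrix (Fin 3) (Fin 3) F :=
  !![y 0, y 1, y 2; y 1, y 3, y 4; y 2, y 4, y 5]

/-- The pairing `B(a,y) = a0*y0 + ... + a5*y5`. -/
def Bform {F : Type} [Field F] (a y : Fin 6 → F) : F :=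
  a 0 * y 0 + a 1 * y 1 + a 2 * y 2 + a 3 * y 3 + a 4 * y 4 + a 5 * y 5

/-- The squab of conics associated with a (nonzero) point `y`: the hyperplane
`{a : B(a,y) = 0}` of the space of quadratic forms. -/
def squab {F : Type} [Field F] (y : Fin 6 → F) : Submodule F (Fin 6 → F) where
  carrier := {a | Bform a y = 0}
  add_mem' := by
    intro a b ha hb
    simp only [Set.mem_setOf_eq, Bform, Pi.add_apply] at *
    linear_combination ha + hb
  zero_mem' := by simp [Bform]
  smul_mem' := by
    intro c a ha
    simp only [Set.mem_setOf_eq, Bform, Pi.smul_apply, smul_eq_mul] at *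
    linear_combination c * ha

section Aux

variable {F : Type} [Field F]

@[simp] lemma vec6_five {α : Type*} (a b c d e f : α) : ![a, b, c, d, e, f] 5 = f := rfl

lemma mulLin_smul_left (t : F) (b c : Fin 3 → F) : mulLin (t • b) c = t • mulLin b c := by
  funext i
  fin_cases i <;> simp [mulLin, Matrix.cons_val_succ] <;> ring

lemma mulLin_smul_right (t : F) (b c : Fin 3 → F) : mulLin b (t • c) = t • mulLin b c := by
  funext i
  fin_cases i <;> simp [mulLin, Matrix.cons_val_succ] <;> ring

lemma disc_smul (t : F) (a : Fin 6 → F) : disc (t • a) = t ^ 3 * disc a := by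
  simp only [disc, Pi.smul_apply, smul_eq_mul]; ring

lemma isDoubleLine_smul {t : F} (ht : t ≠ 0) {a : Fin 6 → F} (h : IsDoubleLine a) :
    IsDoubleLine (t • a) := by
  obtain ⟨c, l, hc, hl, rfl⟩ := h
  exact ⟨t * c, l, mul_ne_zero ht hc, hl, by rw [smul_smul]⟩

lemma isRealPair_smul {t : F} (ht : t ≠ 0) {a : Fin 6 → F} (h : IsRealPair a) :
    IsRealPair (t • a) := by
  obtain ⟨b, c, h1, h2, rfl⟩ := h
  refine ⟨t • b, c, ?_, ?_, (mulLin_smul_left t b c).symm⟩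
  · rintro ⟨s, hs⟩
    exact h1 ⟨s * t, hs.trans (smul_smul s t b)⟩
  · rintro ⟨s, hs⟩
    have hb : b = t⁻¹ • (s • c) := by rw [← hs, inv_smul_smul₀ ht]
    exact h2 ⟨t⁻¹ * s, hb.trans (smul_smul _ _ _)⟩

lemma isImagPair_smul {t : F} (ht : t ≠ 0) {a : Fin 6 → F} (h : IsImagPair a) :
    IsImagPair (t • a) := by
  obtain ⟨hd, hnf⟩ := h
  refine ⟨by rw [disc_smul, hd, mul_zero], ?_⟩
  rintro ⟨l1, l2, hl⟩
  exact hnf ⟨t⁻¹ • l1, l2, by rw [mulLin_smul_left, ← hl, inv_smul_smul₀ ht]⟩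

lemma isNonsingular_smul {t : F} (ht : t ≠ 0) {a : Fin 6 → F} (h : IsNonsingular a) :
    IsNonsingular (t • a) := by
  rw [IsNonsingular, disc_smul]
  exact mul_ne_zero (pow_ne_zero _ ht) h

lemma notProp_of_minor {b c : Fin 3 → F} (i j : Fin 3) (h : b i * c j - b j * c i ≠ 0) :
    (¬ ∃ t : F, c = t • b) ∧ (¬ ∃ t : F, b = t • c) := by
  constructor
  · rintro ⟨t, ht⟩
    apply h
    rw [ht]
    simp only [Pi.smul_apply, smul_eq_mul]
    ring
  · rintro ⟨t, ht⟩
    apply h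
    rw [ht]
    simp only [Pi.smul_apply, smul_eq_mul]
    ring

lemma double_iff (htwo : (2:F) ≠ 0) {a : Fin 6 → F} (ha : a ≠ 0) (h1 : a 1 = 0)
    (h4 : a 4 = 0) :
    IsDoubleLine a ↔ (a 3 = 0 ∧ a 2 ^ 2 = 4 * a 0 * a 5) ∨ (a 0 = 0 ∧ a 2 = 0 ∧ a 5 = 0) := by
  constructor
  · rintro ⟨c, l, hc, hl, h⟩
    have e0 : a 0 = c * (l 0 * l 0) := by rw [h]; simp [mulLin]
    have e1 : (0:F) = c * (l 0 * l 1 + l 1 * l 0) := by rw [← h1, h]; simp [mulLin]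
    have e2 : a 2 = c * (l 0 * l 2 + l 2 * l 0) := by rw [h]; simp [mulLin]
    have e3 : a 3 = c * (l 1 * l 1) := by rw [h]; simp [mulLin]
    have e4 : (0:F) = c * (l 1 * l 2 + l 2 * l 1) := by rw [← h4, h]; simp [mulLin]
    have e5 : a 5 = c * (l 2 * l 2) := by rw [h]; simp [mulLin]
    have h01 : l 0 * l 1 = 0 := by
      have hx : (2 * c) * (l 0 * l 1) = 0 := by linear_combination -e1
      rcases mul_eq_zero.mp hx with h' | h'
      · exact absurd h' (mul_ne_zero htwo hc)
      · exact h'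
    have h12 : l 1 * l 2 = 0 := by
      have hx : (2 * c) * (l 1 * l 2) = 0 := by linear_combination -e4
      rcases mul_eq_zero.mp hx with h' | h'
      · exact absurd h' (mul_ne_zero htwo hc)
      · exact h'
    by_cases hl1 : l 1 = 0
    · left
      refine ⟨by rw [e3, hl1]; ring, by rw [e0, e2, e5]; ring⟩
    · right
      have hl0 : l 0 = 0 := by
        rcases mul_eq_zero.mp h01 with h' | h'
        · exact h'
        · exact absurd h' hl1
      have hl2 : l 2 = 0 := by
        rcases mul_eq_zero.mp h12 with h' | h'
        · exact absurd h' hl1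
        · exact h'
      exact ⟨by rw [e0, hl0]; ring, by rw [e2, hl0]; ring, by rw [e5, hl2]; ring⟩
  · rintro (⟨h3, hD⟩ | ⟨h0, h2', h5⟩)
    · by_cases h0 : a 0 = 0
      · have ha2 : a 2 = 0 := by
          have hsq : a 2 ^ 2 = 0 := by rw [hD, h0]; ring
          exact pow_eq_zero_iff (two_ne_zero) |>.mp hsq
        have ha5 : a 5 ≠ 0 := by
          intro h5
          apply ha
          funext i
          fin_cases i <;> simp [h0, h1, ha2, h3, h4, h5]
        refine ⟨a 5, ![0,0,1], ha5, fun hC => by simpa using congrFun hC 2, ?_⟩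
        funext i
        fin_cases i <;> simp [mulLin, h0, h1, ha2, h3, h4]
      · refine ⟨(a 0)⁻¹, ![a 0, 0, a 2 / 2], inv_ne_zero h0,
          fun hC => h0 (by simpa using congrFun hC 0), ?_⟩
        funext i
        fin_cases i
        · simp [mulLin]
          field_simp
        · simp [mulLin, h1]
        · simp [mulLin]
          field_simp
          ring
        · simp [mulLin, h3]
        · simp [mulLin, h4]
        · simp [mulLin]
          field_simp
          linear_combination -hD
    · have h3 : a 3 ≠ 0 := by
        intro h3
        apply ha
        funext i
        fin_cases i <;> simp [h0, h1, h2', h3, h4, h5]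
      refine ⟨a 3, ![0,1,0], h3, fun hC => by simpa using congrFun hC 1, ?_⟩
      funext i
      fin_cases i <;> simp [mulLin, h0, h1, h2', h4, h5]

lemma real_iff (htwo : (2:F) ≠ 0) {a : Fin 6 → F} (ha : a ≠ 0) (h1 : a 1 = 0)
    (h4 : a 4 = 0) :
    IsRealPair a ↔
      (a 3 = 0 ∧ a 2 ^ 2 - 4 * a 0 * a 5 ≠ 0 ∧ IsSquare (a 2 ^ 2 - 4 * a 0 * a 5)) ∨
      (a 3 ≠ 0 ∧ a 2 ^ 2 = 4 * a 0 * a 5 ∧ ¬(a 0 = 0 ∧ a 2 = 0 ∧ a 5 = 0) ∧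
        ((a 0 ≠ 0 ∧ IsSquare (-(a 3 * a 0))) ∨ (a 0 = 0 ∧ IsSquare (-(a 3 * a 5))))) := by
  constructor
  · rintro ⟨b, c, hnc, hnb, h⟩
    have e0 : a 0 = b 0 * c 0 := by rw [h]; simp [mulLin]
    have e1 : (0:F) = b 0 * c 1 + b 1 * c 0 := by rw [← h1, h]; simp [mulLin]
    have e2 : a 2 = b 0 * c 2 + b 2 * c 0 := by rw [h]; simp [mulLin]
    have e3 : a 3 = b 1 * c 1 := by rw [h]; simp [mulLin]
    have e4 : (0:F) = b 1 * c 2 + b 2 * c 1 := by rw [← h4, h]; simp [mulLin]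
    have e5 : a 5 = b 2 * c 2 := by rw [h]; simp [mulLin]
    by_cases hw : a 3 = 0
    · left
      have h11 : b 1 * c 1 = 0 := by rw [← e3]; exact hw
      have hb1 : b 1 = 0 := by
        by_contra hb1
        have hc1 : c 1 = 0 := (mul_eq_zero.mp h11).resolve_left hb1
        have hc0 : c 0 = 0 := by
          have hx : b 1 * c 0 = 0 := by linear_combination -e1 - b 0 * hc1
          exact (mul_eq_zero.mp hx).resolve_left hb1
        have hc2 : c 2 = 0 := by
          have hx : b 1 * c 2 = 0 := by linear_combination -e4 - b 2 * hc1
          exact (mul_eq_zero.mp hx).resolve_left hb1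
        exact hnc ⟨0, by funext i; fin_cases i <;> simp [hc0, hc1, hc2]⟩
      have hc1 : c 1 = 0 := by
        by_contra hc1
        have hb0 : b 0 = 0 := by
          have hx : b 0 * c 1 = 0 := by linear_combination -e1 - c 0 * hb1
          exact (mul_eq_zero.mp hx).resolve_right hc1
        have hb2 : b 2 = 0 := by
          have hx : b 2 * c 1 = 0 := by linear_combination -e4 - c 2 * hb1
          exact (mul_eq_zero.mp hx).resolve_right hc1
        exact hnb ⟨0, by funext i; fin_cases i <;> simp [hb0, hb1, hb2]⟩
      have hDeq : a 2 ^ 2 - 4 * a 0 * a 5 = (b 0 * c 2 - b 2 * c 0) ^ 2 := by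
        rw [e0, e2, e5]; ring
      have hd : b 0 * c 2 - b 2 * c 0 ≠ 0 := by
        intro hd0
        by_cases hb0 : b 0 = 0
        · by_cases hb2 : b 2 = 0
          · exact hnb ⟨0, by funext i; fin_cases i <;> simp [hb0, hb1, hb2]⟩
          · have hc0 : c 0 = 0 := by
              have hx : b 2 * c 0 = 0 := by linear_combination -hd0 + c 2 * hb0
              exact (mul_eq_zero.mp hx).resolve_left hb2
            refine hnc ⟨c 2 / b 2, ?_⟩
            funext i
            fin_cases i
            · simp [hb0, hc0]
            · simp [hb1, hc1]
            · simp; field_simp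
        · have hc2v : c 2 = b 2 * c 0 / b 0 := by field_simp; linear_combination hd0
          refine hnc ⟨c 0 / b 0, ?_⟩
          funext i
          fin_cases i
          · simp; field_simp
          · simp [hb1, hc1]
          · simp [hc2v]; field_simp
      exact ⟨hw, by rw [hDeq]; exact pow_ne_zero 2 hd,
        ⟨b 0 * c 2 - b 2 * c 0, by rw [hDeq]; ring⟩⟩
    · right
      have hbc : b 1 * c 1 ≠ 0 := by rw [← e3]; exact hw
      have hb1 : b 1 ≠ 0 := left_ne_zero_of_mul hbc
      have hc1 : c 1 ≠ 0 := right_ne_zero_of_mul hbc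
      have hc0 : c 0 = -(b 0 * c 1) / b 1 := by field_simp; linear_combination -e1
      have hc2 : c 2 = -(b 2 * c 1) / b 1 := by field_simp; linear_combination -e4
      have ea0 : a 0 = -(a 3 * (b 0 / b 1) ^ 2) := by
        rw [e0, e3, hc0]; field_simp
      have ea2 : a 2 = -(2 * a 3 * (b 0 / b 1) * (b 2 / b 1)) := by
        rw [e2, e3, hc0, hc2]; field_simp; ring
      have ea5 : a 5 = -(a 3 * (b 2 / b 1) ^ 2) := by
        rw [e5, e3, hc2]; field_simp
      refine ⟨hw, by rw [ea0, ea2, ea5]; ring, ?_, ?_⟩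
      · rintro ⟨z0, z2, z5⟩
        have hb0 : b 0 = 0 := by
          rw [ea0, neg_eq_zero] at z0
          rcases mul_eq_zero.mp z0 with h' | h'
          · exact absurd h' hw
          · rcases div_eq_zero_iff.mp (pow_eq_zero_iff two_ne_zero |>.mp h') with h'' | h''
            · exact h''
            · exact absurd h'' hb1
        have hb2 : b 2 = 0 := by
          rw [ea5, neg_eq_zero] at z5
          rcases mul_eq_zero.mp z5 with h' | h'
          · exact absurd h' hw
          · rcases div_eq_zero_iff.mp (pow_eq_zero_iff two_ne_zero |>.mp h') with h'' | h''
            · exact h''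
            · exact absurd h'' hb1
        refine hnc ⟨c 1 / b 1, ?_⟩
        funext i
        fin_cases i
        · simp [hb0, hc0]
        · simp; field_simp
        · simp [hb2, hc2, hb0]
      · by_cases hz0 : a 0 = 0
        · exact Or.inr ⟨hz0, ⟨a 3 * (b 2 / b 1), by rw [ea5]; ring⟩⟩
        · exact Or.inl ⟨hz0, ⟨a 3 * (b 0 / b 1), by rw [ea0]; ring⟩⟩
  · rintro (⟨h3, hDne, d, hd⟩ | ⟨h3, hD, hnz, hsq⟩)
    · -- a3 = 0, D = d * d nonzero
      have hdne : d ≠ 0 := by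
        intro h'
        apply hDne
        rw [hd, h']
        ring
      by_cases h0 : a 0 = 0
      · have ha2 : a 2 ≠ 0 := by
          intro h2'
          apply hDne
          rw [h0, h2']
          ring
        obtain ⟨hp1, hp2⟩ := notProp_of_minor (b := (![0,0,1] : Fin 3 → F))
          (c := (![a 2, 0, a 5] : Fin 3 → F)) 0 2 (by simpa using ha2)
        refine ⟨![0,0,1], ![a 2, 0, a 5], hp1, hp2, ?_⟩
        funext i
        fin_cases i <;> simp [mulLin, h0, h1, h3, h4]
      · obtain ⟨hp1, hp2⟩ := notProp_of_minor (b := (![a 0, 0, (a 2 + d)/2] : Fin 3 → F))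
          (c := (![1, 0, (a 2 - d)/(2 * a 0)] : Fin 3 → F)) 0 2 (by
            show a 0 * ((a 2 - d)/(2 * a 0)) - (a 2 + d)/2 * 1 ≠ 0
            intro hx
            field_simp at hx
            have h4a : (2 * (2 * a 0)) * d = 0 := by linear_combination (-2 * a 0) * hx
            have h2a : (2 : F) * (2 * a 0) ≠ 0 := mul_ne_zero htwo (mul_ne_zero htwo h0)
            exact hdne ((mul_eq_zero.mp h4a).resolve_left h2a))
        refine ⟨![a 0, 0, (a 2 + d)/2], ![1, 0, (a 2 - d)/(2 * a 0)], hp1, hp2, ?_⟩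
        funext i
        fin_cases i
        · show a 0 = a 0 * 1; ring
        · show a 1 = a 0 * 0 + 0 * 1; rw [h1]; ring
        · show a 2 = a 0 * ((a 2 - d)/(2 * a 0)) + (a 2 + d)/2 * 1
          field_simp
          ring
        · show a 3 = 0 * 0; rw [h3]; ring
        · show a 4 = 0 * ((a 2 - d)/(2 * a 0)) + (a 2 + d)/2 * 0; rw [h4]; ring
        · show a 5 = (a 2 + d)/2 * ((a 2 - d)/(2 * a 0))
          field_simp
          linear_combination -hd
    · rcases hsq with ⟨hz0, s, hs⟩ | ⟨hz0, s, hs⟩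
      · have hsne : s ≠ 0 := by
          intro h'
          rw [h', mul_zero, neg_eq_zero] at hs
          exact mul_ne_zero h3 hz0 hs
        obtain ⟨hp1, hp2⟩ := notProp_of_minor
          (b := (![-s, a 3, -(s * (a 2 / (2 * a 0)))] : Fin 3 → F))
          (c := (![s / a 3, 1, s * (a 2 / (2 * a 0)) / a 3] : Fin 3 → F)) 0 1 (by
            show -s * 1 - a 3 * (s / a 3) ≠ 0
            intro hx
            field_simp at hx
            have h2s : (2 : F) * s = 0 := by linear_combination -hx
            exact hsne ((mul_eq_zero.mp h2s).resolve_left htwo))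
        refine ⟨_, _, hp1, hp2, ?_⟩
        funext i
        fin_cases i
        · show a 0 = -s * (s / a 3)
          field_simp
          linear_combination -hs
        · show a 1 = -s * 1 + a 3 * (s / a 3)
          rw [h1]; field_simp; ring
        · show a 2 = -s * (s * (a 2 / (2 * a 0)) / a 3) + -(s * (a 2 / (2 * a 0))) * (s / a 3)
          field_simp
          linear_combination (-2 * a 2) * hs
        · show a 3 = a 3 * 1; ring
        · show a 4 = a 3 * (s * (a 2 / (2 * a 0)) / a 3) + -(s * (a 2 / (2 * a 0))) * 1
          rw [h4]; field_simp; ring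
        · show a 5 = -(s * (a 2 / (2 * a 0))) * (s * (a 2 / (2 * a 0)) / a 3)
          field_simp
          linear_combination (s * s) * hD - 4 * a 0 * a 5 * hs
      · have hz2 : a 2 = 0 := by
          have hx : a 2 ^ 2 = 0 := by rw [hD, hz0]; ring
          exact pow_eq_zero_iff two_ne_zero |>.mp hx
        have hz5 : a 5 ≠ 0 := fun h5' => hnz ⟨hz0, hz2, h5'⟩
        have hsne : s ≠ 0 := by
          intro h'
          rw [h', mul_zero, neg_eq_zero] at hs
          exact mul_ne_zero h3 hz5 hs
        obtain ⟨hp1, hp2⟩ := notProp_of_minor (b := (![0, a 3, -s] : Fin 3 → F))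
          (c := (![0, 1, s / a 3] : Fin 3 → F)) 1 2 (by
            show a 3 * (s / a 3) - -s * 1 ≠ 0
            intro hx
            field_simp at hx
            have h2s : (2 : F) * s = 0 := by linear_combination hx
            exact hsne ((mul_eq_zero.mp h2s).resolve_left htwo))
        refine ⟨_, _, hp1, hp2, ?_⟩
        funext i
        fin_cases i
        · show a 0 = 0 * 0; rw [hz0]; ring
        · show a 1 = 0 * 1 + a 3 * 0; rw [h1]; ring
        · show a 2 = 0 * (s / a 3) + -s * 0; rw [hz2]; ring
        · show a 3 = a 3 * 1; ring
        · show a 4 = a 3 * (s / a 3) + -s * 1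
          rw [h4]; field_simp; ring
        · show a 5 = -s * (s / a 3)
          field_simp
          linear_combination -hs

lemma factors_cases {a : Fin 6 → F} (ha : a ≠ 0) (b c : Fin 3 → F) (h : a = mulLin b c) :
    IsDoubleLine a ∨ IsRealPair a := by
  by_cases hp : ∃ t : F, c = t • b
  · obtain ⟨t, rfl⟩ := hp
    rw [mulLin_smul_right] at h
    have ht : t ≠ 0 := by
      intro h'
      exact ha (by rw [h, h', zero_smul])
    have hb : b ≠ 0 := by
      intro h'
      apply ha
      rw [h, h']
      funext i
      fin_cases i <;> simp [mulLin]
    exact Or.inl ⟨t, b, ht, hb, h⟩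
  · by_cases hp' : ∃ t : F, b = t • c
    · obtain ⟨t, rfl⟩ := hp'
      rw [mulLin_smul_left] at h
      have ht : t ≠ 0 := by
        intro h'
        exact ha (by rw [h, h', zero_smul])
      have hc : c ≠ 0 := by
        intro h'
        apply ha
        rw [h, h']
        funext i
        fin_cases i <;> simp [mulLin]
      exact Or.inl ⟨t, c, ht, hc, h⟩
    · exact Or.inr ⟨b, c, hp, hp', h⟩

lemma isDoubleLine_factors {a : Fin 6 → F} (h : IsDoubleLine a) :
    ∃ b c : Fin 3 → F, a = mulLin b c := by
  obtain ⟨t, l, ht, hl, rfl⟩ := h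
  exact ⟨t • l, l, (mulLin_smul_left t l l).symm⟩

lemma imag_iff' {a : Fin 6 → F} (ha : a ≠ 0) :
    IsImagPair a ↔ disc a = 0 ∧ ¬ IsDoubleLine a ∧ ¬ IsRealPair a := by
  constructor
  · rintro ⟨hd, hnf⟩
    refine ⟨hd, fun h => hnf (isDoubleLine_factors h), fun h => ?_⟩
    obtain ⟨b, c, _, _, h'⟩ := h
    exact hnf ⟨b, c, h'⟩
  · rintro ⟨hd, hnd, hnr⟩
    refine ⟨hd, ?_⟩
    rintro ⟨b, c, h⟩
    rcases factors_cases ha b c h with h' | h'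
    exacts [hnd h', hnr h']

lemma disc_eq {a : Fin 6 → F} (h1 : a 1 = 0) (h4 : a 4 = 0) :
    disc a = a 3 * (4 * a 0 * a 5 - a 2 ^ 2) := by
  simp only [disc, h1, h4]; ring

lemma imag_iff (htwo : (2:F) ≠ 0) {a : Fin 6 → F} (ha : a ≠ 0) (h1 : a 1 = 0)
    (h4 : a 4 = 0) :
    IsImagPair a ↔
      (a 3 = 0 ∧ a 2 ^ 2 - 4 * a 0 * a 5 ≠ 0 ∧ ¬ IsSquare (a 2 ^ 2 - 4 * a 0 * a 5)) ∨
      (a 3 ≠ 0 ∧ a 2 ^ 2 = 4 * a 0 * a 5 ∧ ¬(a 0 = 0 ∧ a 2 = 0 ∧ a 5 = 0) ∧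
        ¬((a 0 ≠ 0 ∧ IsSquare (-(a 3 * a 0))) ∨ (a 0 = 0 ∧ IsSquare (-(a 3 * a 5))))) := by
  rw [imag_iff' ha, double_iff htwo ha h1 h4, real_iff htwo ha h1 h4, disc_eq h1 h4]
  by_cases h3 : a 3 = 0
  · have hz : ¬(a 0 = 0 ∧ a 2 = 0 ∧ a 5 = 0) := by
      rintro ⟨z0, z2, z5⟩
      exact ha (funext fun i => by fin_cases i <;> simp [z0, h1, z2, h3, h4, z5])
    constructor
    · rintro ⟨hd, hnd, hnr⟩
      left
      have hDne : a 2 ^ 2 - 4 * a 0 * a 5 ≠ 0 := by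
        intro hD0
        exact hnd (Or.inl ⟨h3, by linear_combination hD0⟩)
      exact ⟨h3, hDne, fun hsq => hnr (Or.inl ⟨h3, hDne, hsq⟩)⟩
    · rintro (⟨_, hDne, hnsq⟩ | ⟨h3', _⟩)
      · refine ⟨by rw [h3]; ring, ?_, ?_⟩
        · rintro (⟨_, hD⟩ | ⟨z0, z2, z5⟩)
          · exact hDne (by linear_combination hD)
          · exact hz ⟨z0, z2, z5⟩
        · rintro (⟨_, _, hsq⟩ | ⟨h3', _⟩)
          · exact hnsq hsq
          · exact h3' h3
      · exact absurd h3 h3'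
  · constructor
    · rintro ⟨hd, hnd, hnr⟩
      right
      have hD : a 2 ^ 2 = 4 * a 0 * a 5 := by
        rcases mul_eq_zero.mp hd with h' | h'
        · exact absurd h' h3
        · linear_combination -h'
      have hnz : ¬(a 0 = 0 ∧ a 2 = 0 ∧ a 5 = 0) := fun hh => hnd (Or.inr hh)
      exact ⟨h3, hD, hnz, fun hcs => hnr (Or.inr ⟨h3, hD, hnz, hcs⟩)⟩
    · rintro (⟨h3', _⟩ | ⟨_, hD, hnz, hncs⟩)
      · exact absurd h3' h3
      · refine ⟨by rw [show 4 * a 0 * a 5 - a 2 ^ 2 = 0 by linear_combination -hD]; ring,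
          ?_, ?_⟩
        · rintro (⟨h3', _⟩ | hh)
          · exact h3 h3'
          · exact hnz hh
        · rintro (⟨h3', _, _⟩ | ⟨_, _, _, hcs⟩)
          · exact h3 h3'
          · exact hncs hcs

lemma nonsingular_iff {a : Fin 6 → F} (h1 : a 1 = 0) (h4 : a 4 = 0) :
    IsNonsingular a ↔ a 3 ≠ 0 ∧ a 2 ^ 2 - 4 * a 0 * a 5 ≠ 0 := by
  rw [IsNonsingular, disc_eq h1 h4]
  constructor
  · intro h
    refine ⟨left_ne_zero_of_mul h, fun hD => right_ne_zero_of_mul h ?_⟩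
    linear_combination -hD
  · rintro ⟨hl, hr⟩
    exact mul_ne_zero hl (fun hD => hr (by linear_combination -hD))

end Aux

section Web

variable {F : Type} [Field F]

def webSet (F : Type) [Field F] : Set (Fin 6 → F) :=
  {![1, 0, 0, 0, 0, 0], ![0, 0, 1, 0, 0, 0], ![0, 0, 0, 1, 0, 0], ![0, 0, 0, 0, 0, 1]}

def Ksub (F : Type) [Field F] : Submodule F (Fin 6 → F) where
  carrier := {a | a 1 = 0 ∧ a 4 = 0}
  add_mem' := fun ha hb => ⟨by simp [ha.1, hb.1], by simp [ha.2, hb.2]⟩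
  zero_mem' := ⟨rfl, rfl⟩
  smul_mem' := fun c a ha => ⟨by simp [ha.1], by simp [ha.2]⟩

lemma mem_web_iff (a : Fin 6 → F) :
    a ∈ Submodule.span F (webSet F) ↔ a 1 = 0 ∧ a 4 = 0 := by
  constructor
  · intro h
    have hle : Submodule.span F (webSet F) ≤ Ksub F := by
      rw [Submodule.span_le]
      rintro v hv
      simp only [webSet, Set.mem_insert_iff, Set.mem_singleton_iff] at hv
      rcases hv with rfl | rfl | rfl | rfl <;> exact ⟨rfl, rfl⟩
    exact hle h
  · rintro ⟨h1, h4⟩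
    have hrep : a = a 0 • ![1, 0, 0, 0, 0, 0] + a 2 • ![0, 0, 1, 0, 0, 0]
        + a 3 • ![0, 0, 0, 1, 0, 0] + a 5 • ![0, 0, 0, 0, 0, 1] := by
      funext i
      fin_cases i <;> simp [h1, h4]
    rw [hrep]
    refine Submodule.add_mem _ (Submodule.add_mem _ (Submodule.add_mem _ ?_ ?_) ?_) ?_ <;>
      exact Submodule.smul_mem _ _ (Submodule.subset_span (by simp [webSet]))

def NSet (F : Type) [Field F] : Set (Fin 6 → F) :=
  {a | a 1 = 0 ∧ a 4 = 0 ∧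
    (a 3 = 1 ∨ (a 3 = 0 ∧ a 0 = 1) ∨ (a 3 = 0 ∧ a 0 = 0 ∧ a 2 = 1) ∨
      (a 3 = 0 ∧ a 0 = 0 ∧ a 2 = 0 ∧ a 5 = 1))}

lemma NSet_ne_zero {a : Fin 6 → F} (h : a ∈ NSet F) : a ≠ 0 := by
  rintro rfl
  rcases h.2.2 with h' | ⟨_, h'⟩ | ⟨_, _, h'⟩ | ⟨_, _, _, h'⟩ <;> simp at h'

lemma NSet_scale {a : Fin 6 → F} (h1 : a 1 = 0) (h4 : a 4 = 0) (ha : a ≠ 0) :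
    ∃ t : F, t ≠ 0 ∧ t • a ∈ NSet F := by
  by_cases h3 : a 3 = 0
  · by_cases h0 : a 0 = 0
    · by_cases h2 : a 2 = 0
      · have h5 : a 5 ≠ 0 := fun h5 =>
          ha (funext fun i => by fin_cases i <;> simp [h0, h1, h2, h3, h4, h5])
        exact ⟨(a 5)⁻¹, inv_ne_zero h5, by simp [h1], by simp [h4],
          Or.inr (Or.inr (Or.inr ⟨by simp [h3], by simp [h0], by simp [h2],
            by simp; exact inv_mul_cancel₀ h5⟩))⟩
      · exact ⟨(a 2)⁻¹, inv_ne_zero h2, by simp [h1], by simp [h4],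
          Or.inr (Or.inr (Or.inl ⟨by simp [h3], by simp [h0],
            by simp; exact inv_mul_cancel₀ h2⟩))⟩
    · exact ⟨(a 0)⁻¹, inv_ne_zero h0, by simp [h1], by simp [h4],
        Or.inr (Or.inl ⟨by simp [h3], by simp; exact inv_mul_cancel₀ h0⟩)⟩
  · exact ⟨(a 3)⁻¹, inv_ne_zero h3, by simp [h1], by simp [h4],
      Or.inl (by simp; exact inv_mul_cancel₀ h3)⟩

lemma NSet_unique {a b : Fin 6 → F} (ha : a ∈ NSet F) (hb : b ∈ NSet F) {t : F}
    (h : t • a = b) : a = b := by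
  obtain ⟨ha1, ha4, hpa⟩ := ha
  obtain ⟨hb1, hb4, hpb⟩ := hb
  have ht0 : t * a 0 = b 0 := by rw [← h]; simp
  have ht2 : t * a 2 = b 2 := by rw [← h]; simp
  have ht3 : t * a 3 = b 3 := by rw [← h]; simp
  have ht5 : t * a 5 = b 5 := by rw [← h]; simp
  have key : t = 1 := by
    rcases hpa with p | ⟨p3, p0⟩ | ⟨p3, p0, p2⟩ | ⟨p3, p0, p2, p5⟩ <;>
      rcases hpb with q | ⟨q3, q0⟩ | ⟨q3, q0, q2⟩ | ⟨q3, q0, q2, q5⟩ <;>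
      simp_all <;>
      first
      | (rw [← ht5] at ht0; simp at ht0)
      | (rw [← ht5] at ht2; simp at ht2)
      | (rw [← ht0] at ht3; simp at ht3)
      | (rw [← ht0] at ht2; simp at ht2)
  rw [← h, key, one_smul]

lemma numConics_web_eq (T : (Fin 6 → F) → Prop)
    (hT : ∀ t : F, t ≠ 0 → ∀ a, T a → T (t • a)) :
    numConics (Submodule.span F (webSet F)) T = {a : Fin 6 → F | a ∈ NSet F ∧ T a}.ncard := by
  rw [numConics]
  have himg : {P : Submodule F (Fin 6 → F) |
      ∃ a, a ≠ 0 ∧ a ∈ Submodule.span F (webSet F) ∧ T a ∧ P = Submodule.span F {a}}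
      = (fun a => Submodule.span F {a}) '' {a | a ∈ NSet F ∧ T a} := by
    ext P
    simp only [Set.mem_setOf_eq, Set.mem_image]
    constructor
    · rintro ⟨a, ha0, haW, haT, rfl⟩
      obtain ⟨h1, h4⟩ := (mem_web_iff a).mp haW
      obtain ⟨t, ht, htN⟩ := NSet_scale h1 h4 ha0
      exact ⟨t • a, ⟨htN, hT t ht a haT⟩,
        Submodule.span_singleton_smul_eq (IsUnit.mk0 t ht) a⟩
    · rintro ⟨a, ⟨haN, haT⟩, rfl⟩
      exact ⟨a, NSet_ne_zero haN, (mem_web_iff a).mpr ⟨haN.1, haN.2.1⟩, haT, rfl⟩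
  rw [himg, Set.ncard_image_of_injOn]
  intro x hx y hy hxy
  have hxy' : Submodule.span F {x} = Submodule.span F {y} := hxy
  have hy' : y ∈ Submodule.span F {x} := by
    rw [hxy']
    exact Submodule.mem_span_singleton_self y
  obtain ⟨t, ht⟩ := Submodule.mem_span_singleton.mp hy'
  exact NSet_unique hx.1 hy.1 ht

end Web

section SqCount

open Finset

variable {F : Type} [Field F] [Fintype F] [DecidableEq F]

lemma card_square_filters (hF : ringChar F ≠ 2) :
    (univ.filter (fun x : F => x ≠ 0 ∧ IsSquare x)).card = (Fintype.card F - 1) / 2 ∧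
    (univ.filter (fun x : F => ¬ IsSquare x)).card = (Fintype.card F - 1) / 2 := by
  have hsum := quadraticChar_sum_zero hF
  set A := univ.filter (fun x : F => quadraticChar F x = 1) with hA
  set B := univ.filter (fun x : F => quadraticChar F x = -1) with hB
  have hAeq : A = univ.filter (fun x : F => x ≠ 0 ∧ IsSquare x) := by
    ext x
    simp only [hA, mem_filter, mem_univ, true_and]
    constructor
    · intro hx
      have hx0 : x ≠ 0 := by
        intro h0
        rw [h0, quadraticChar_zero] at hx
        exact zero_ne_one hx
      exact ⟨hx0, (quadraticChar_one_iff_isSquare hx0).mp hx⟩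
    · rintro ⟨hx0, hsq⟩
      exact (quadraticChar_one_iff_isSquare hx0).mpr hsq
  have hBeq : B = univ.filter (fun x : F => ¬ IsSquare x) := by
    ext x
    simp only [hB, mem_filter, mem_univ, true_and]
    exact quadraticChar_neg_one_iff_not_isSquare
  have hdisj : Disjoint A B := by
    rw [Finset.disjoint_left]
    intro x hxA hxB
    rw [hA, mem_filter] at hxA
    rw [hB, mem_filter] at hxB
    rw [hxA.2] at hxB
    exact absurd hxB.2 (by decide)
  have hunion : A ∪ B = univ.erase 0 := by
    ext x
    simp only [mem_union, hA, hB, mem_filter, mem_univ, true_and, mem_erase]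
    constructor
    · rintro (hx | hx)
      · refine ⟨?_, trivial⟩
        intro h0
        rw [h0, quadraticChar_zero] at hx
        exact zero_ne_one hx
      · refine ⟨?_, trivial⟩
        intro h0
        rw [h0, quadraticChar_zero] at hx
        simp at hx
    · rintro ⟨hx0, -⟩
      exact quadraticChar_dichotomy hx0
  have hsum2 : ∑ x ∈ A ∪ B, quadraticChar F x = 0 := by
    rw [← hsum]
    apply Finset.sum_subset (Finset.subset_univ _)
    intro x _ hx
    rw [hunion, mem_erase] at hx
    push_neg at hx
    rcases eq_or_ne x 0 with rfl | hx0
    · exact quadraticChar_zero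
    · exact absurd (Finset.mem_univ x) (hx hx0)
  have hsumA : ∑ x ∈ A, quadraticChar F x = (A.card : ℤ) := by
    rw [Finset.sum_congr rfl (fun x hx => (mem_filter.mp hx).2), Finset.sum_const,
      nsmul_eq_mul, mul_one]
  have hsumB : ∑ x ∈ B, quadraticChar F x = -(B.card : ℤ) := by
    rw [Finset.sum_congr rfl (fun x hx => (mem_filter.mp hx).2), Finset.sum_const,
      nsmul_eq_mul, mul_neg_one]
  have hAB : (A.card : ℤ) = (B.card : ℤ) := by
    have := hsum2
    rw [Finset.sum_union hdisj, hsumA, hsumB] at this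
    linarith
  have hABcard : A.card = B.card := by exact_mod_cast hAB
  have hcardsum : A.card + B.card = Fintype.card F - 1 := by
    rw [← Finset.card_union_of_disjoint hdisj, hunion, Finset.card_erase_of_mem (mem_univ 0),
      Finset.card_univ]
  constructor
  · rw [← hAeq]; omega
  · rw [← hBeq]; omega

lemma nat_card_sq (hF : ringChar F ≠ 2) :
    Nat.card {x : F // x ≠ 0 ∧ IsSquare x} = (Fintype.card F - 1) / 2 := by
  rw [Nat.card_eq_fintype_card, Fintype.card_subtype]
  exact (card_square_filters hF).1

lemma nat_card_nonsq (hF : ringChar F ≠ 2) :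
    Nat.card {x : F // ¬ IsSquare x} = (Fintype.card F - 1) / 2 := by
  rw [Nat.card_eq_fintype_card, Fintype.card_subtype]
  exact (card_square_filters hF).2

lemma not_isSquare_ne_zero {x : F} (h : ¬ IsSquare x) : x ≠ 0 :=
  fun h0 => h (h0 ▸ ⟨0, (mul_zero 0).symm⟩)

lemma nat_card_sq_neg (hF : ringChar F ≠ 2) :
    Nat.card {x : F // x ≠ 0 ∧ IsSquare (-x)} = (Fintype.card F - 1) / 2 := by
  rw [← nat_card_sq hF]
  apply Nat.card_congr
  exact (Equiv.neg F).subtypeEquiv (fun x => by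
    simp only [Equiv.neg_apply, neg_ne_zero])

lemma nat_card_nonsq_neg (hF : ringChar F ≠ 2) :
    Nat.card {x : F // x ≠ 0 ∧ ¬ IsSquare (-x)} = (Fintype.card F - 1) / 2 := by
  rw [← nat_card_nonsq hF]
  refine Nat.card_congr (Equiv.trans
    ((Equiv.neg F).subtypeEquiv (p := fun x => x ≠ 0 ∧ ¬ IsSquare (-x))
      (q := fun y => y ≠ 0 ∧ ¬ IsSquare y)
      (fun x => by simp only [Equiv.neg_apply, neg_ne_zero]))
    (Equiv.subtypeEquivRight
      (fun y => ⟨fun h => h.2, fun h => ⟨not_isSquare_ne_zero h, h⟩⟩)))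

lemma nat_card_ne_zero : Nat.card {x : F // x ≠ 0} = Fintype.card F - 1 := by
  rw [Nat.card_eq_fintype_card, Fintype.card_subtype_compl, Fintype.card_subtype_eq]

end SqCount

section Decomp

variable {F : Type} [Field F] [Fintype F]

def equivP1 (Q : F → F → F → Prop) :
    {a : Fin 6 → F // a 1 = 0 ∧ a 4 = 0 ∧ a 3 = 1 ∧ Q (a 0) (a 2) (a 5)} ≃
      {p : F × F × F // Q p.1 p.2.1 p.2.2} where
  toFun a := ⟨(a.1 0, a.1 2, a.1 5), a.2.2.2.2⟩
  invFun p := ⟨![p.1.1, 0, p.1.2.1, 1, 0, p.1.2.2], rfl, rfl, rfl, p.2⟩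
  left_inv a := Subtype.ext (by
    funext i
    fin_cases i <;> simp [a.2.1, a.2.2.1, a.2.2.2.1])
  right_inv p := rfl

def equivP2 (Q : F → F → Prop) :
    {a : Fin 6 → F // a 1 = 0 ∧ a 4 = 0 ∧ a 3 = 0 ∧ a 0 = 1 ∧ Q (a 2) (a 5)} ≃
      {p : F × F // Q p.1 p.2} where
  toFun a := ⟨(a.1 2, a.1 5), a.2.2.2.2.2⟩
  invFun p := ⟨![1, 0, p.1.1, 0, 0, p.1.2], rfl, rfl, rfl, rfl, p.2⟩
  left_inv a := Subtype.ext (by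
    funext i
    fin_cases i <;> simp [a.2.1, a.2.2.1, a.2.2.2.1, a.2.2.2.2.1])
  right_inv p := rfl

def equivP3 (Q : F → Prop) :
    {a : Fin 6 → F // a 1 = 0 ∧ a 4 = 0 ∧ a 3 = 0 ∧ a 0 = 0 ∧ a 2 = 1 ∧ Q (a 5)} ≃
      {z : F // Q z} where
  toFun a := ⟨a.1 5, a.2.2.2.2.2.2⟩
  invFun z := ⟨![0, 0, 1, 0, 0, z.1], rfl, rfl, rfl, rfl, rfl, z.2⟩
  left_inv a := Subtype.ext (by
    funext i
    fin_cases i <;> simp [a.2.1, a.2.2.1, a.2.2.2.1, a.2.2.2.2.1, a.2.2.2.2.2.1])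
  right_inv z := rfl

lemma master (T : (Fin 6 → F) → Prop)
    (Q1 : F → F → F → Prop) (Q2 : F → F → Prop) (Q3 : F → Prop) (q4 : Prop) [Decidable q4]
    (hQ1 : ∀ a : Fin 6 → F, a 1 = 0 → a 4 = 0 → a 3 = 1 → (T a ↔ Q1 (a 0) (a 2) (a 5)))
    (hQ2 : ∀ a : Fin 6 → F, a 1 = 0 → a 4 = 0 → a 3 = 0 → a 0 = 1 → (T a ↔ Q2 (a 2) (a 5)))
    (hQ3 : ∀ a : Fin 6 → F, a 1 = 0 → a 4 = 0 → a 3 = 0 → a 0 = 0 → a 2 = 1 →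
      (T a ↔ Q3 (a 5)))
    (hQ4 : T ![0, 0, 0, 0, 0, 1] ↔ q4) :
    {a : Fin 6 → F | a ∈ NSet F ∧ T a}.ncard =
      Nat.card {p : F × F × F // Q1 p.1 p.2.1 p.2.2} +
      Nat.card {p : F × F // Q2 p.1 p.2} +
      Nat.card {z : F // Q3 z} +
      (if q4 then 1 else 0) := by
  have hset : {a : Fin 6 → F | a ∈ NSet F ∧ T a} =
      ({a : Fin 6 → F | a 1 = 0 ∧ a 4 = 0 ∧ a 3 = 1 ∧ Q1 (a 0) (a 2) (a 5)} ∪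
       ({a : Fin 6 → F | a 1 = 0 ∧ a 4 = 0 ∧ a 3 = 0 ∧ a 0 = 1 ∧ Q2 (a 2) (a 5)} ∪
        ({a : Fin 6 → F | a 1 = 0 ∧ a 4 = 0 ∧ a 3 = 0 ∧ a 0 = 0 ∧ a 2 = 1 ∧ Q3 (a 5)} ∪
         {a : Fin 6 → F | a = ![0, 0, 0, 0, 0, 1] ∧ q4}))) := by
    ext a
    simp only [Set.mem_setOf_eq, Set.mem_union, NSet]
    constructor
    · rintro ⟨⟨h1, h4, pat⟩, hT⟩
      rcases pat with p | ⟨p3, p0⟩ | ⟨p3, p0, p2⟩ | ⟨p3, p0, p2, p5⟩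
      · exact Or.inl ⟨h1, h4, p, (hQ1 a h1 h4 p).mp hT⟩
      · exact Or.inr (Or.inl ⟨h1, h4, p3, p0, (hQ2 a h1 h4 p3 p0).mp hT⟩)
      · exact Or.inr (Or.inr (Or.inl ⟨h1, h4, p3, p0, p2, (hQ3 a h1 h4 p3 p0 p2).mp hT⟩))
      · have ha : a = ![0, 0, 0, 0, 0, 1] := by
          funext i
          fin_cases i <;> simp [h1, h4, p3, p0, p2, p5]
        exact Or.inr (Or.inr (Or.inr ⟨ha, hQ4.mp (ha ▸ hT)⟩))
    · rintro (⟨h1, h4, p, hq⟩ | ⟨h1, h4, p3, p0, hq⟩ | ⟨h1, h4, p3, p0, p2, hq⟩ | ⟨rfl, hq⟩)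
      · exact ⟨⟨h1, h4, Or.inl p⟩, (hQ1 a h1 h4 p).mpr hq⟩
      · exact ⟨⟨h1, h4, Or.inr (Or.inl ⟨p3, p0⟩)⟩, (hQ2 a h1 h4 p3 p0).mpr hq⟩
      · exact ⟨⟨h1, h4, Or.inr (Or.inr (Or.inl ⟨p3, p0, p2⟩))⟩,
          (hQ3 a h1 h4 p3 p0 p2).mpr hq⟩
      · exact ⟨⟨rfl, rfl, Or.inr (Or.inr (Or.inr ⟨rfl, rfl, rfl, rfl⟩))⟩, hQ4.mpr hq⟩
  have c1 : {a : Fin 6 → F | a 1 = 0 ∧ a 4 = 0 ∧ a 3 = 1 ∧ Q1 (a 0) (a 2) (a 5)}.ncard =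
      Nat.card {p : F × F × F // Q1 p.1 p.2.1 p.2.2} := by
    rw [← Nat.card_coe_set_eq]
    exact Nat.card_congr (equivP1 Q1)
  have c2 : {a : Fin 6 → F | a 1 = 0 ∧ a 4 = 0 ∧ a 3 = 0 ∧ a 0 = 1 ∧ Q2 (a 2) (a 5)}.ncard =
      Nat.card {p : F × F // Q2 p.1 p.2} := by
    rw [← Nat.card_coe_set_eq]
    exact Nat.card_congr (equivP2 Q2)
  have c3 : {a : Fin 6 → F | a 1 = 0 ∧ a 4 = 0 ∧ a 3 = 0 ∧ a 0 = 0 ∧ a 2 = 1 ∧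
      Q3 (a 5)}.ncard = Nat.card {z : F // Q3 z} := by
    rw [← Nat.card_coe_set_eq]
    exact Nat.card_congr (equivP3 Q3)
  have c4 : {a : Fin 6 → F | a = ![0, 0, 0, 0, 0, 1] ∧ q4}.ncard =
      (if q4 then 1 else 0) := by
    by_cases h : q4
    · have he : {a : Fin 6 → F | a = ![0, 0, 0, 0, 0, 1] ∧ q4} = {![0, 0, 0, 0, 0, 1]} := by
        ext x
        simp [h]
      rw [he, Set.ncard_singleton, if_pos h]
    · have he : {a : Fin 6 → F | a = ![0, 0, 0, 0, 0, 1] ∧ q4} = ∅ := by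
        ext x
        simp [h]
      rw [he, Set.ncard_empty, if_neg h]
  have d3 : Disjoint {a : Fin 6 → F | a 1 = 0 ∧ a 4 = 0 ∧ a 3 = 0 ∧ a 0 = 0 ∧ a 2 = 1 ∧
      Q3 (a 5)} {a : Fin 6 → F | a = ![0, 0, 0, 0, 0, 1] ∧ q4} := by
    rw [Set.disjoint_left]
    rintro a ⟨_, _, _, _, h2', _⟩ ⟨rfl, _⟩
    simp at h2'
  have d2 : Disjoint {a : Fin 6 → F | a 1 = 0 ∧ a 4 = 0 ∧ a 3 = 0 ∧ a 0 = 1 ∧ Q2 (a 2) (a 5)}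
      ({a : Fin 6 → F | a 1 = 0 ∧ a 4 = 0 ∧ a 3 = 0 ∧ a 0 = 0 ∧ a 2 = 1 ∧ Q3 (a 5)} ∪
       {a : Fin 6 → F | a = ![0, 0, 0, 0, 0, 1] ∧ q4}) := by
    rw [Set.disjoint_left]
    rintro a ⟨_, _, _, h0', _⟩ (⟨_, _, _, h0'', _⟩ | ⟨rfl, _⟩)
    · rw [h0''] at h0'
      exact zero_ne_one h0'
    · simp at h0'
  have d1 : Disjoint {a : Fin 6 → F | a 1 = 0 ∧ a 4 = 0 ∧ a 3 = 1 ∧ Q1 (a 0) (a 2) (a 5)}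
      ({a : Fin 6 → F | a 1 = 0 ∧ a 4 = 0 ∧ a 3 = 0 ∧ a 0 = 1 ∧ Q2 (a 2) (a 5)} ∪
       ({a : Fin 6 → F | a 1 = 0 ∧ a 4 = 0 ∧ a 3 = 0 ∧ a 0 = 0 ∧ a 2 = 1 ∧ Q3 (a 5)} ∪
        {a : Fin 6 → F | a = ![0, 0, 0, 0, 0, 1] ∧ q4})) := by
    rw [Set.disjoint_left]
    rintro a ⟨_, _, h3', _⟩ (⟨_, _, h3'', _⟩ | (⟨_, _, h3'', _⟩ | ⟨rfl, _⟩))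
    · rw [h3''] at h3'
      exact zero_ne_one h3'
    · rw [h3''] at h3'
      exact zero_ne_one h3'
    · simp at h3'
  rw [hset, Set.ncard_union_eq d1 (Set.toFinite _) (Set.toFinite _),
    Set.ncard_union_eq d2 (Set.toFinite _) (Set.toFinite _),
    Set.ncard_union_eq d3 (Set.toFinite _) (Set.toFinite _), c1, c2, c3, c4]
  ring

end Decomp

section Counts

variable {F : Type} [Field F] [Fintype F]

def equivDL2 (h4 : (4:F) ≠ 0) : {p : F × F // p.1 ^ 2 = 4 * p.2} ≃ F where
  toFun p := p.1.1
  invFun y := ⟨(y, y ^ 2 / 4), by field_simp⟩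
  left_inv p := Subtype.ext (Prod.ext rfl (by
    have h := p.2
    field_simp
    linear_combination h))
  right_inv y := rfl

def equivShift (P : F → Prop) (h4 : (4:F) ≠ 0) :
    {p : F × F // P (p.1 ^ 2 - 4 * p.2)} ≃ F × {w : F // P w} where
  toFun p := (p.1.1, ⟨p.1.1 ^ 2 - 4 * p.1.2, p.2⟩)
  invFun x := ⟨(x.1, (x.1 ^ 2 - x.2.1) / 4), by
    show P (x.1 ^ 2 - 4 * ((x.1 ^ 2 - x.2.1) / 4))
    have he : x.1 ^ 2 - 4 * ((x.1 ^ 2 - x.2.1) / 4) = x.2.1 := by field_simp; ring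
    rw [he]
    exact x.2.2⟩
  left_inv p := Subtype.ext (Prod.ext rfl (by
    show (p.1.1 ^ 2 - (p.1.1 ^ 2 - 4 * p.1.2)) / 4 = p.1.2
    field_simp; ring))
  right_inv x := by
    refine Prod.ext rfl (Subtype.ext ?_)
    show x.1 ^ 2 - 4 * ((x.1 ^ 2 - x.2.1) / 4) = x.2.1
    field_simp; ring

def equivGraph (R : F → Prop) (hR : ∀ x, R x → x ≠ 0) (h4 : (4:F) ≠ 0) :
    {p : F × F × F // R p.1 ∧ p.2.1 ^ 2 = 4 * p.1 * p.2.2} ≃ {x : F // R x} × F where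
  toFun p := (⟨p.1.1, p.2.1⟩, p.1.2.1)
  invFun x := ⟨(x.1.1, x.2, x.2 ^ 2 / (4 * x.1.1)), x.1.2, by
    have hx := hR x.1.1 x.1.2
    field_simp⟩
  left_inv p := Subtype.ext (Prod.ext rfl (Prod.ext rfl (by
    have h := p.2.2
    have hx := hR _ p.2.1
    show p.1.2.1 ^ 2 / (4 * p.1.1) = p.1.2.2
    field_simp
    linear_combination h)))
  right_inv x := rfl

def equivNS (h4 : (4:F) ≠ 0) :
    {p : F × F × F // p.1 ≠ 0 ∧ p.2.1 ^ 2 ≠ 4 * p.1 * p.2.2} ≃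
      {x : F // x ≠ 0} × F × {w : F // w ≠ 0} where
  toFun p := (⟨p.1.1, p.2.1⟩, p.1.2.1,
    ⟨p.1.2.1 ^ 2 - 4 * p.1.1 * p.1.2.2, sub_ne_zero_of_ne p.2.2⟩)
  invFun t := ⟨(t.1.1, t.2.1, (t.2.1 ^ 2 - t.2.2.1) / (4 * t.1.1)), t.1.2, by
    have hx := t.1.2
    have hw := t.2.2.2
    intro hcon
    apply hw
    field_simp at hcon
    linear_combination hcon⟩
  left_inv p := Subtype.ext (Prod.ext rfl (Prod.ext rfl (by
    have hx := p.2.1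
    show (p.1.2.1 ^ 2 - (p.1.2.1 ^ 2 - 4 * p.1.1 * p.1.2.2)) / (4 * p.1.1) = p.1.2.2
    field_simp; ring)))
  right_inv t := by
    refine Prod.ext rfl (Prod.ext rfl (Subtype.ext ?_))
    show t.2.1 ^ 2 - 4 * t.1.1 * ((t.2.1 ^ 2 - t.2.2.1) / (4 * t.1.1)) = t.2.2.1
    have hx := t.1.2
    field_simp; ring

def equivZero (P : F → Prop) :
    {p : F × F × F // p.1 = 0 ∧ p.2.1 = 0 ∧ P p.2.2} ≃ {z : F // P z} where
  toFun p := ⟨p.1.2.2, p.2.2.2⟩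
  invFun z := ⟨(0, 0, z.1), rfl, rfl, z.2⟩
  left_inv p := Subtype.ext (Prod.ext p.2.1.symm (Prod.ext p.2.2.1.symm rfl))
  right_inv z := rfl

def equivNS0 : {p : F × F × F // p.1 = 0 ∧ p.2.1 ≠ 0} ≃ {y : F // y ≠ 0} × F where
  toFun p := (⟨p.1.2.1, p.2.2⟩, p.1.2.2)
  invFun t := ⟨(0, t.1.1, t.2), rfl, t.1.2⟩
  left_inv p := Subtype.ext (Prod.ext p.2.1.symm rfl)
  right_inv t := rfl

lemma nat_card_triple_zero :
    Nat.card {p : F × F × F // p.1 = 0 ∧ p.2.1 = 0 ∧ p.2.2 = 0} = 1 := by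
  haveI : Unique {p : F × F × F // p.1 = 0 ∧ p.2.1 = 0 ∧ p.2.2 = 0} :=
    ⟨⟨⟨(0, 0, 0), rfl, rfl, rfl⟩⟩,
      fun a => Subtype.ext (Prod.ext a.2.1 (Prod.ext a.2.2.1 a.2.2.2))⟩
  exact Nat.card_unique

lemma nat_card_true : Nat.card {z : F // True} = Fintype.card F := by
  rw [← Nat.card_eq_fintype_card]
  exact Nat.card_congr (Equiv.subtypeUnivEquiv (fun _ => trivial))

lemma nat_card_false {α : Type*} : Nat.card {x : α // False} = 0 := by
  haveI : IsEmpty {x : α // False} := ⟨fun p => p.2⟩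
  exact Nat.card_of_isEmpty

lemma nat_card_or {α : Type*} [Fintype α] (A B : α → Prop) (h : ∀ x, ¬(A x ∧ B x)) :
    Nat.card {x // A x ∨ B x} = Nat.card {x // A x} + Nat.card {x // B x} := by
  classical
  simp only [Nat.card_eq_fintype_card]
  rw [Fintype.card_subtype, Fintype.card_subtype, Fintype.card_subtype, Finset.filter_or,
    Finset.card_union_of_disjoint]
  rw [Finset.disjoint_filter]
  intro x _ hA hB
  exact h x ⟨hA, hB⟩

end Counts

section TypeCounts

variable {F : Type} [Field F] [Fintype F]

lemma count_double (htwo : (2:F) ≠ 0) (h4ne : (4:F) ≠ 0) :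
    {a : Fin 6 → F | a ∈ NSet F ∧ IsDoubleLine a}.ncard = Fintype.card F + 2 := by
  classical
  have hQ1 : ∀ a : Fin 6 → F, a 1 = 0 → a 4 = 0 → a 3 = 1 →
      (IsDoubleLine a ↔ (a 0 = 0 ∧ a 2 = 0 ∧ a 5 = 0)) := by
    intro a h1 h4 p
    have ha : a ≠ 0 := fun h0 => one_ne_zero (α := F) (by rw [← p, h0]; simp)
    rw [double_iff htwo ha h1 h4, p]
    simp
  have hQ2 : ∀ a : Fin 6 → F, a 1 = 0 → a 4 = 0 → a 3 = 0 → a 0 = 1 →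
      (IsDoubleLine a ↔ a 2 ^ 2 = 4 * a 5) := by
    intro a h1 h4 p3 p0
    have ha : a ≠ 0 := fun h0 => one_ne_zero (α := F) (by rw [← p0, h0]; simp)
    rw [double_iff htwo ha h1 h4, p0, p3]
    simp
  have hQ3 : ∀ a : Fin 6 → F, a 1 = 0 → a 4 = 0 → a 3 = 0 → a 0 = 0 → a 2 = 1 →
      (IsDoubleLine a ↔ False) := by
    intro a h1 h4 p3 p0 p2
    have ha : a ≠ 0 := fun h0 => one_ne_zero (α := F) (by rw [← p2, h0]; simp)
    rw [double_iff htwo ha h1 h4, p0, p2, p3]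
    simp
  have hQ4 : IsDoubleLine ![(0:F), 0, 0, 0, 0, 1] ↔ True := by
    have ha : ![(0:F), 0, 0, 0, 0, 1] ≠ 0 := fun h0 => one_ne_zero (α := F)
      (by simpa using congrFun h0 5)
    rw [double_iff htwo ha rfl rfl]
    simp
  rw [master IsDoubleLine (fun x y z => x = 0 ∧ y = 0 ∧ z = 0) (fun y z => y ^ 2 = 4 * z) (fun _ => False) True hQ1 hQ2 hQ3 hQ4, nat_card_triple_zero, nat_card_false,
    if_pos trivial, Nat.card_congr (equivDL2 h4ne), Nat.card_eq_fintype_card]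
  omega

lemma count_nonsingular (htwo : (2:F) ≠ 0) (h4ne : (4:F) ≠ 0) :
    {a : Fin 6 → F | a ∈ NSet F ∧ IsNonsingular a}.ncard =
      (Fintype.card F - 1) * (Fintype.card F * (Fintype.card F - 1)) +
        (Fintype.card F - 1) * Fintype.card F := by
  classical
  have hQ1 : ∀ a : Fin 6 → F, a 1 = 0 → a 4 = 0 → a 3 = 1 →
      (IsNonsingular a ↔ a 2 ^ 2 ≠ 4 * a 0 * a 5) := by
    intro a h1 h4 p
    rw [nonsingular_iff h1 h4, p]
    simp [sub_ne_zero]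
  have hQ2 : ∀ a : Fin 6 → F, a 1 = 0 → a 4 = 0 → a 3 = 0 → a 0 = 1 →
      (IsNonsingular a ↔ False) := by
    intro a h1 h4 p3 p0
    rw [nonsingular_iff h1 h4, p3]
    simp
  have hQ3 : ∀ a : Fin 6 → F, a 1 = 0 → a 4 = 0 → a 3 = 0 → a 0 = 0 → a 2 = 1 →
      (IsNonsingular a ↔ False) := by
    intro a h1 h4 p3 p0 p2
    rw [nonsingular_iff h1 h4, p3]
    simp
  have hQ4 : IsNonsingular ![(0:F), 0, 0, 0, 0, 1] ↔ False := by
    rw [nonsingular_iff rfl rfl]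
    simp
  rw [master IsNonsingular (fun x y z => y ^ 2 ≠ 4 * x * z) (fun _ _ => False) (fun _ => False) False hQ1 hQ2 hQ3 hQ4, nat_card_false, nat_card_false,
    if_neg not_false]
  have hsplit : ∀ p : F × F × F, (p.2.1 ^ 2 ≠ 4 * p.1 * p.2.2) ↔
      ((p.1 ≠ 0 ∧ p.2.1 ^ 2 ≠ 4 * p.1 * p.2.2) ∨ (p.1 = 0 ∧ p.2.1 ≠ 0)) := by
    intro p
    constructor
    · intro h
      by_cases hx : p.1 = 0
      · refine Or.inr ⟨hx, fun hy => h ?_⟩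
        rw [hx, hy]
        ring
      · exact Or.inl ⟨hx, h⟩
    · rintro (⟨_, h⟩ | ⟨hx, hy⟩)
      · exact h
      · rw [hx]
        intro hcon
        exact pow_ne_zero 2 hy (by rw [hcon]; ring)
  have hcount : Nat.card {p : F × F × F // p.2.1 ^ 2 ≠ 4 * p.1 * p.2.2} =
      (Fintype.card F - 1) * (Fintype.card F * (Fintype.card F - 1)) +
        (Fintype.card F - 1) * Fintype.card F := by
    rw [Nat.card_congr (Equiv.subtypeEquivRight hsplit),
      nat_card_or _ _ (fun p hp => hp.1.1 hp.2.1),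
      Nat.card_congr (equivNS h4ne), Nat.card_congr equivNS0,
      Nat.card_prod, Nat.card_prod, Nat.card_prod, nat_card_ne_zero,
      Nat.card_eq_fintype_card]
  rw [hcount]
  omega

lemma count_real (hRC : ringChar F ≠ 2) (htwo : (2:F) ≠ 0) (h4ne : (4:F) ≠ 0) :
    {a : Fin 6 → F | a ∈ NSet F ∧ IsRealPair a}.ncard =
      (Fintype.card F - 1) / 2 * Fintype.card F + (Fintype.card F - 1) / 2 +
        Fintype.card F * ((Fintype.card F - 1) / 2) + Fintype.card F := by
  classical
  have hQ1 : ∀ a : Fin 6 → F, a 1 = 0 → a 4 = 0 → a 3 = 1 →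
      (IsRealPair a ↔ (a 2 ^ 2 = 4 * a 0 * a 5 ∧
        ((a 0 ≠ 0 ∧ IsSquare (-(a 0))) ∨ (a 0 = 0 ∧ a 5 ≠ 0 ∧ IsSquare (-(a 5)))))) := by
    intro a h1 h4 p
    have ha : a ≠ 0 := fun h0 => one_ne_zero (α := F) (by rw [← p, h0]; simp)
    rw [real_iff htwo ha h1 h4, p]
    constructor
    · rintro (⟨h', _⟩ | ⟨_, hD, hnz, (⟨hx, hsq⟩ | ⟨hx, hsq⟩)⟩)
      · exact absurd h' one_ne_zero
      · exact ⟨hD, Or.inl ⟨hx, by rwa [one_mul] at hsq⟩⟩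
      · have hy : a 2 = 0 := pow_eq_zero_iff two_ne_zero |>.mp (by rw [hD, hx]; ring)
        have hz : a 5 ≠ 0 := fun h5 => hnz ⟨hx, hy, h5⟩
        exact ⟨hD, Or.inr ⟨hx, hz, by rwa [one_mul] at hsq⟩⟩
    · rintro ⟨hD, (⟨hx, hsq⟩ | ⟨hx, hz, hsq⟩)⟩
      · exact Or.inr ⟨one_ne_zero, hD, fun hh => hx hh.1,
          Or.inl ⟨hx, by rwa [one_mul]⟩⟩
      · exact Or.inr ⟨one_ne_zero, hD, fun hh => hz hh.2.2,
          Or.inr ⟨hx, by rwa [one_mul]⟩⟩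
  have hQ2 : ∀ a : Fin 6 → F, a 1 = 0 → a 4 = 0 → a 3 = 0 → a 0 = 1 →
      (IsRealPair a ↔ (a 2 ^ 2 - 4 * a 5 ≠ 0 ∧ IsSquare (a 2 ^ 2 - 4 * a 5))) := by
    intro a h1 h4 p3 p0
    have ha : a ≠ 0 := fun h0 => one_ne_zero (α := F) (by rw [← p0, h0]; simp)
    rw [real_iff htwo ha h1 h4, p3, p0]
    simp
  have hQ3 : ∀ a : Fin 6 → F, a 1 = 0 → a 4 = 0 → a 3 = 0 → a 0 = 0 → a 2 = 1 →
      (IsRealPair a ↔ True) := by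
    intro a h1 h4 p3 p0 p2
    have ha : a ≠ 0 := fun h0 => one_ne_zero (α := F) (by rw [← p2, h0]; simp)
    rw [real_iff htwo ha h1 h4, p3, p0, p2]
    simp
  have hQ4 : IsRealPair ![(0:F), 0, 0, 0, 0, 1] ↔ False := by
    have ha : ![(0:F), 0, 0, 0, 0, 1] ≠ 0 := fun h0 => one_ne_zero (α := F)
      (by simpa using congrFun h0 5)
    rw [real_iff htwo ha rfl rfl]
    simp
  have cA : Nat.card {p : F × F × F //
      (p.1 ≠ 0 ∧ IsSquare (-p.1)) ∧ p.2.1 ^ 2 = 4 * p.1 * p.2.2} =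
      (Fintype.card F - 1) / 2 * Fintype.card F := by
    rw [Nat.card_congr (equivGraph (fun x => x ≠ 0 ∧ IsSquare (-x)) (fun x h => h.1) h4ne),
      Nat.card_prod, nat_card_sq_neg hRC, Nat.card_eq_fintype_card]
  have cB : Nat.card {p : F × F × F //
      p.1 = 0 ∧ p.2.1 = 0 ∧ (p.2.2 ≠ 0 ∧ IsSquare (-p.2.2))} =
      (Fintype.card F - 1) / 2 := by
    rw [Nat.card_congr (equivZero (fun z => z ≠ 0 ∧ IsSquare (-z))), nat_card_sq_neg hRC]
  have hsplit : ∀ p : F × F × F, (p.2.1 ^ 2 = 4 * p.1 * p.2.2 ∧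
      ((p.1 ≠ 0 ∧ IsSquare (-p.1)) ∨ (p.1 = 0 ∧ p.2.2 ≠ 0 ∧ IsSquare (-p.2.2)))) ↔
      (((p.1 ≠ 0 ∧ IsSquare (-p.1)) ∧ p.2.1 ^ 2 = 4 * p.1 * p.2.2) ∨
        (p.1 = 0 ∧ p.2.1 = 0 ∧ (p.2.2 ≠ 0 ∧ IsSquare (-p.2.2)))) := by
    intro p
    constructor
    · rintro ⟨hD, (h | ⟨hx, hz⟩)⟩
      · exact Or.inl ⟨h, hD⟩
      · have hy : p.2.1 = 0 := pow_eq_zero_iff two_ne_zero |>.mp (by rw [hD, hx]; ring)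
        exact Or.inr ⟨hx, hy, hz⟩
    · rintro (⟨h, hD⟩ | ⟨hx, hy, hz⟩)
      · exact ⟨hD, Or.inl h⟩
      · exact ⟨by rw [hx, hy]; ring, Or.inr ⟨hx, hz⟩⟩
  have cQ1 : Nat.card {p : F × F × F // p.2.1 ^ 2 = 4 * p.1 * p.2.2 ∧
      ((p.1 ≠ 0 ∧ IsSquare (-p.1)) ∨ (p.1 = 0 ∧ p.2.2 ≠ 0 ∧ IsSquare (-p.2.2)))} =
      (Fintype.card F - 1) / 2 * Fintype.card F + (Fintype.card F - 1) / 2 := by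
    rw [Nat.card_congr (Equiv.subtypeEquivRight hsplit),
      nat_card_or _ _ (fun p hp => hp.1.1.1 hp.2.1), cA, cB]
  have cQ2 : Nat.card {p : F × F // p.1 ^ 2 - 4 * p.2 ≠ 0 ∧
      IsSquare (p.1 ^ 2 - 4 * p.2)} = Fintype.card F * ((Fintype.card F - 1) / 2) := by
    rw [Nat.card_congr (equivShift (fun w => w ≠ 0 ∧ IsSquare w) h4ne), Nat.card_prod,
      nat_card_sq hRC, Nat.card_eq_fintype_card]
  rw [master IsRealPair
      (fun x y z => y ^ 2 = 4 * x * z ∧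
        ((x ≠ 0 ∧ IsSquare (-x)) ∨ (x = 0 ∧ z ≠ 0 ∧ IsSquare (-z))))
      (fun y z => y ^ 2 - 4 * z ≠ 0 ∧ IsSquare (y ^ 2 - 4 * z))
      (fun _ => True) False hQ1 hQ2 hQ3 hQ4, cQ1, cQ2, nat_card_true, if_neg not_false]
  omega

lemma count_imag (hRC : ringChar F ≠ 2) (htwo : (2:F) ≠ 0) (h4ne : (4:F) ≠ 0) :
    {a : Fin 6 → F | a ∈ NSet F ∧ IsImagPair a}.ncard =
      (Fintype.card F - 1) / 2 * Fintype.card F + (Fintype.card F - 1) / 2 +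
        Fintype.card F * ((Fintype.card F - 1) / 2) := by
  classical
  have hQ1 : ∀ a : Fin 6 → F, a 1 = 0 → a 4 = 0 → a 3 = 1 →
      (IsImagPair a ↔ (a 2 ^ 2 = 4 * a 0 * a 5 ∧
        ((a 0 ≠ 0 ∧ ¬ IsSquare (-(a 0))) ∨ (a 0 = 0 ∧ a 5 ≠ 0 ∧ ¬ IsSquare (-(a 5)))))) := by
    intro a h1 h4 p
    have ha : a ≠ 0 := fun h0 => one_ne_zero (α := F) (by rw [← p, h0]; simp)
    rw [imag_iff htwo ha h1 h4, p]
    constructor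
    · rintro (⟨h', _⟩ | ⟨_, hD, hnz, hncs⟩)
      · exact absurd h' one_ne_zero
      · by_cases hx : a 0 = 0
        · have hy : a 2 = 0 := pow_eq_zero_iff two_ne_zero |>.mp (by rw [hD, hx]; ring)
          have hz : a 5 ≠ 0 := fun h5 => hnz ⟨hx, hy, h5⟩
          exact ⟨hD, Or.inr ⟨hx, hz,
            fun hsq => hncs (Or.inr ⟨hx, by rwa [one_mul]⟩)⟩⟩
        · exact ⟨hD, Or.inl ⟨hx,
            fun hsq => hncs (Or.inl ⟨hx, by rwa [one_mul]⟩)⟩⟩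
    · rintro ⟨hD, (⟨hx, hns⟩ | ⟨hx, hz, hns⟩)⟩
      · refine Or.inr ⟨one_ne_zero, hD, fun hh => hx hh.1, ?_⟩
        rintro (⟨_, hsq⟩ | ⟨hx0, _⟩)
        · exact hns (by rwa [one_mul] at hsq)
        · exact hx hx0
      · refine Or.inr ⟨one_ne_zero, hD, fun hh => hz hh.2.2, ?_⟩
        rintro (⟨hx0, _⟩ | ⟨_, hsq⟩)
        · exact hx0 hx
        · exact hns (by rwa [one_mul] at hsq)
  have hQ2 : ∀ a : Fin 6 → F, a 1 = 0 → a 4 = 0 → a 3 = 0 → a 0 = 1 →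
      (IsImagPair a ↔ (a 2 ^ 2 - 4 * a 5 ≠ 0 ∧ ¬ IsSquare (a 2 ^ 2 - 4 * a 5))) := by
    intro a h1 h4 p3 p0
    have ha : a ≠ 0 := fun h0 => one_ne_zero (α := F) (by rw [← p0, h0]; simp)
    rw [imag_iff htwo ha h1 h4, p3, p0]
    simp
  have hQ3 : ∀ a : Fin 6 → F, a 1 = 0 → a 4 = 0 → a 3 = 0 → a 0 = 0 → a 2 = 1 →
      (IsImagPair a ↔ False) := by
    intro a h1 h4 p3 p0 p2
    have ha : a ≠ 0 := fun h0 => one_ne_zero (α := F) (by rw [← p2, h0]; simp)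
    rw [imag_iff htwo ha h1 h4, p3, p0, p2]
    simp
  have hQ4 : IsImagPair ![(0:F), 0, 0, 0, 0, 1] ↔ False := by
    have ha : ![(0:F), 0, 0, 0, 0, 1] ≠ 0 := fun h0 => one_ne_zero (α := F)
      (by simpa using congrFun h0 5)
    rw [imag_iff htwo ha rfl rfl]
    simp
  have cA : Nat.card {p : F × F × F //
      (p.1 ≠ 0 ∧ ¬ IsSquare (-p.1)) ∧ p.2.1 ^ 2 = 4 * p.1 * p.2.2} =
      (Fintype.card F - 1) / 2 * Fintype.card F := by
    rw [Nat.card_congr (equivGraph (fun x => x ≠ 0 ∧ ¬ IsSquare (-x)) (fun x h => h.1) h4ne),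
      Nat.card_prod, nat_card_nonsq_neg hRC, Nat.card_eq_fintype_card]
  have cB : Nat.card {p : F × F × F //
      p.1 = 0 ∧ p.2.1 = 0 ∧ (p.2.2 ≠ 0 ∧ ¬ IsSquare (-p.2.2))} =
      (Fintype.card F - 1) / 2 := by
    rw [Nat.card_congr (equivZero (fun z => z ≠ 0 ∧ ¬ IsSquare (-z))),
      nat_card_nonsq_neg hRC]
  have hsplit : ∀ p : F × F × F, (p.2.1 ^ 2 = 4 * p.1 * p.2.2 ∧
      ((p.1 ≠ 0 ∧ ¬ IsSquare (-p.1)) ∨ (p.1 = 0 ∧ p.2.2 ≠ 0 ∧ ¬ IsSquare (-p.2.2)))) ↔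
      (((p.1 ≠ 0 ∧ ¬ IsSquare (-p.1)) ∧ p.2.1 ^ 2 = 4 * p.1 * p.2.2) ∨
        (p.1 = 0 ∧ p.2.1 = 0 ∧ (p.2.2 ≠ 0 ∧ ¬ IsSquare (-p.2.2)))) := by
    intro p
    constructor
    · rintro ⟨hD, (h | ⟨hx, hz⟩)⟩
      · exact Or.inl ⟨h, hD⟩
      · have hy : p.2.1 = 0 := pow_eq_zero_iff two_ne_zero |>.mp (by rw [hD, hx]; ring)
        exact Or.inr ⟨hx, hy, hz⟩
    · rintro (⟨h, hD⟩ | ⟨hx, hy, hz⟩)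
      · exact ⟨hD, Or.inl h⟩
      · exact ⟨by rw [hx, hy]; ring, Or.inr ⟨hx, hz⟩⟩
  have cQ1 : Nat.card {p : F × F × F // p.2.1 ^ 2 = 4 * p.1 * p.2.2 ∧
      ((p.1 ≠ 0 ∧ ¬ IsSquare (-p.1)) ∨ (p.1 = 0 ∧ p.2.2 ≠ 0 ∧ ¬ IsSquare (-p.2.2)))} =
      (Fintype.card F - 1) / 2 * Fintype.card F + (Fintype.card F - 1) / 2 := by
    rw [Nat.card_congr (Equiv.subtypeEquivRight hsplit),
      nat_card_or _ _ (fun p hp => hp.1.1.1 hp.2.1), cA, cB]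
  have cW : Nat.card {w : F // w ≠ 0 ∧ ¬ IsSquare w} = (Fintype.card F - 1) / 2 := by
    rw [← nat_card_nonsq hRC]
    exact Nat.card_congr (Equiv.subtypeEquivRight
      (fun w => ⟨fun h => h.2, fun h => ⟨not_isSquare_ne_zero h, h⟩⟩))
  have cQ2 : Nat.card {p : F × F // p.1 ^ 2 - 4 * p.2 ≠ 0 ∧
      ¬ IsSquare (p.1 ^ 2 - 4 * p.2)} = Fintype.card F * ((Fintype.card F - 1) / 2) := by
    rw [Nat.card_congr (equivShift (fun w => w ≠ 0 ∧ ¬ IsSquare w) h4ne), Nat.card_prod,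
      cW, Nat.card_eq_fintype_card]
  rw [master IsImagPair
      (fun x y z => y ^ 2 = 4 * x * z ∧
        ((x ≠ 0 ∧ ¬ IsSquare (-x)) ∨ (x = 0 ∧ z ≠ 0 ∧ ¬ IsSquare (-z))))
      (fun y z => y ^ 2 - 4 * z ≠ 0 ∧ ¬ IsSquare (y ^ 2 - 4 * z))
      (fun _ => False) False hQ1 hQ2 hQ3 hQ4, cQ1, cQ2, nat_card_false, if_neg not_false]
  omega

end TypeCounts

/-- conic counts of the web `(X0^2, X0X2, X1^2, X2^2)`
(line-orbit `o_{12,1}`), `q` odd. -/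
theorem web_o121_conic_counts (F : Type) [Field F] [Fintype F] (q : ℕ)
    (hq : Fintype.card F = q) (hodd : Odd q) (W : Submodule F (Fin 6 → F))
    (hW : W = Submodule.span F ({![1, 0, 0, 0, 0, 0], ![0, 0, 1, 0, 0, 0],
      ![0, 0, 0, 1, 0, 0], ![0, 0, 0, 0, 0, 1]} : Set (Fin 6 → F))) :
    numConics W IsDoubleLine = q + 2 ∧
    numConics W IsRealPair = q ^ 2 + (q - 1) / 2 ∧
    numConics W IsImagPair = q ^ 2 - (q + 1) / 2 ∧
    numConics W IsNonsingular = q ^ 3 - q ^ 2 := by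
  obtain ⟨k, hk⟩ := hodd
  have hqpos : 0 < q := by
    rw [← hq]
    exact Fintype.card_pos
  have hRC : ringChar F ≠ 2 := by
    intro h2
    have hdvd : ringChar F ∣ q := by
      rw [← hq]
      exact ringChar.dvd (FiniteField.cast_card_eq_zero F)
    rw [h2] at hdvd
    omega
  have htwo : (2:F) ≠ 0 := by
    intro h2
    have hd2 : ringChar F ∣ 2 := ringChar.dvd (by exact_mod_cast h2)
    rcases (Nat.dvd_prime Nat.prime_two).mp hd2 with h1 | h1
    · exact CharP.ringChar_ne_one h1
    · exact hRC h1
  have h4ne : (4:F) ≠ 0 := by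
    have h42 : (4:F) = 2 * 2 := by norm_num
    rw [h42]
    exact mul_ne_zero htwo htwo
  have hWs : W = Submodule.span F (webSet F) := hW
  have hk2 : (q - 1) / 2 = k := by omega
  refine ⟨?_, ?_, ?_, ?_⟩
  · rw [hWs, numConics_web_eq IsDoubleLine (fun t ht a h => isDoubleLine_smul ht h),
      count_double htwo h4ne, hq]
  · rw [hWs, numConics_web_eq IsRealPair (fun t ht a h => isRealPair_smul ht h),
      count_real hRC htwo h4ne, hq, hk2]
    subst hk
    ring
  · rw [hWs, numConics_web_eq IsImagPair (fun t ht a h => isImagPair_smul ht h),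
      count_imag hRC htwo h4ne, hq, hk2]
    have h3 : (q + 1) / 2 = k + 1 := by omega
    have hsq : q ^ 2 = k * q + k + q * k + (k + 1) := by
      subst hk
      ring
    rw [h3, hsq, Nat.add_sub_cancel]
  · rw [hWs, numConics_web_eq IsNonsingular (fun t ht a h => isNonsingular_smul ht h),
      count_nonsingular htwo h4ne, hq]
    have hq1 : q - 1 = 2 * k := by omega
    have hcube : q ^ 3 = 2 * k * (q * (2 * k)) + 2 * k * q + q ^ 2 := by
      subst hk
      ring
    rw [hq1, hcube, Nat.add_sub_cancel]

end Conics
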